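/- Let u be a minimal generator of I = I_{c,(n,d,t)} with block decomposition msupp(u) = B_1 ⊔ ... ⊔ B_r. Then an index i satisfies: there exists k > i with x_k | u and x_i·u/x_k ∈ I and x_i·u/x_k >_lex u, if and only if i belongs to some gap interval of u, where the j-th gap interval (1 ≤ j ≤ r−1) is [max(B_j)+t, min(B_{j+1})−1] if |B_j| < c and [max(B_j)+t+1, min(B_{j+1})−1] if |B_j| = c, and the 0-th gap interval is [1, min(B_1)−1]. -/

import Mathlib

/-- A list (representing a weakly increasing multiset) is `t`-spread if
successive entries differ by at least `t`. -/
def TSpread (t : ℕ) (A : List ℕ) : Prop :=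
  A.Chain' (fun a b => a + t ≤ b)

/-- A block (for the parameter `t`) is a nonempty run whose successive
differences are exactly `t`. -/
def IsBlock (t : ℕ) (B : List ℕ) : Prop :=
  B ≠ [] ∧ B.Chain' (fun a b => b = a + t)

/-- `Bs` is the decomposition of `A` into maximal blocks. -/
def IsBlockDecomp (t : ℕ) (A : List ℕ) (Bs : List (List ℕ)) : Prop :=
  A = Bs.flatten ∧ (∀ B ∈ Bs, IsBlock t B) ∧
    Bs.Chain' (fun B C => ∀ x ∈ B.getLast?, ∀ y ∈ C.head?, x + t < y)

/-- `A` is `c`-bounded: every block of its (unique) maximal block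
decomposition has size at most `c`. -/
def CBounded (c t : ℕ) (A : List ℕ) : Prop :=
  ∀ Bs, IsBlockDecomp t A Bs → ∀ B ∈ Bs, B.length ≤ c

/-- The set of (sorted index lists of) minimal monomial generators of the
`c`-bounded `t`-spread Veronese ideal `I_{c,(n,d,t)}`. -/
def Gen (c n d t : ℕ) : Set (List ℕ) :=
  {A | A.length = d ∧ TSpread t A ∧ CBounded c t A ∧ ∀ i ∈ A, 1 ≤ i ∧ i ≤ n}


namespace Stmt7

lemma head?_eq {B : List ℕ} (h : B ≠ []) : B.head? = some (B.headD 0) := by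
  cases B with
  | nil => exact absurd rfl h
  | cons a l => rfl

lemma headD_mem {B : List ℕ} (h : B ≠ []) : B.headD 0 ∈ B := by
  cases B with
  | nil => exact absurd rfl h
  | cons a l => exact List.mem_cons_self

lemma getLast?_eq {B : List ℕ} (h : B ≠ []) : B.getLast? = some (B.getLastD 0) := by
  induction B with
  | nil => exact absurd rfl h
  | cons a l ih =>
    cases l with
    | nil => rfl
    | cons b l' =>
      rw [List.getLast?_cons_cons, ih (by simp)]
      rfl

lemma getLastD_mem {B : List ℕ} (h : B ≠ []) : B.getLastD 0 ∈ B := by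
  induction B with
  | nil => exact absurd rfl h
  | cons a l ih =>
    cases l with
    | nil => simp
    | cons b l' =>
      have : (a :: b :: l').getLastD 0 = (b :: l').getLastD 0 := rfl
      rw [this]
      exact List.mem_cons_of_mem _ (ih (by simp))

lemma tspread_pairwise {t : ℕ} {l : List ℕ} (h : l.Chain' (fun a b => a + t ≤ b)) :
    l.Pairwise (fun a b => a + t ≤ b) := by
  letI : IsTrans ℕ (fun a b => a + t ≤ b) :=
    ⟨fun a b c hab hbc => le_trans hab (le_trans (Nat.le_add_right b t) hbc)⟩
  exact List.isChain_iff_pairwise.1 h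

lemma pairwise_two {t : ℕ} {l : List ℕ} (h : l.Pairwise (fun a b => a + t ≤ b))
    {x y : ℕ} (hx : x ∈ l) (hy : y ∈ l) (hxy : x ≠ y) : x + t ≤ y ∨ y + t ≤ x := by
  have h' : l.Pairwise (fun a b => a + t ≤ b ∨ b + t ≤ a) :=
    h.imp (fun hab => Or.inl hab)
  haveI : Std.Symm (fun a b : ℕ => a + t ≤ b ∨ b + t ≤ a) := ⟨fun a b hab => hab.symm.imp id id⟩
  exact h'.forall hx hy hxy

lemma mem_ge_of_gt {t : ℕ} {l : List ℕ} (h : l.Pairwise (fun a b => a + t ≤ b))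
    {x k : ℕ} (hx : x ∈ l) (hk : k ∈ l) (hlt : k < x) : k + t ≤ x := by
  rcases pairwise_two h hk hx (Nat.ne_of_lt hlt) with h1 | h1
  · exact h1
  · omega

lemma spread_nodup {t : ℕ} {l : List ℕ} (ht : 1 ≤ t)
    (h : l.Pairwise (fun a b => a + t ≤ b)) : l.Nodup :=
  h.imp (fun hab => by omega)

lemma head_min {t : ℕ} {l : List ℕ} (h : l.Chain' (fun a b => a + t ≤ b))
    {y : ℕ} (hy : y ∈ l) : l.headD 0 ≤ y := by
  cases l with
  | nil => simp at hy
  | cons a l' =>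
    simp only [List.headD_cons]
    rcases List.mem_cons.1 hy with rfl | hy'
    · exact le_refl _
    · have := List.rel_of_pairwise_cons (tspread_pairwise h) hy'
      omega



lemma block_canon {t : ℕ} : ∀ {B : List ℕ}, B.Chain' (fun a b => b = a + t) →
    B = (List.range B.length).map (fun a => B.headD 0 + a * t) := by
  intro B
  induction B with
  | nil => intro _; rfl
  | cons a l ih =>
    intro h
    have hl : l.Chain' (fun a b => b = a + t) := h.tail
    have ihl := ih hl
    cases l with
    | nil => simp [List.range_succ]
    | cons b l' =>
      have hb : b = a + t := (List.isChain_cons_cons.1 h).1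
      simp only [List.length_cons, List.headD_cons]
      rw [List.range_succ_eq_map]
      simp only [List.map_cons, List.map_map]
      refine List.cons_eq_cons.2 ⟨by simp, ?_⟩
      nth_rewrite 1 [ihl]
      simp only [List.headD_cons, List.length_cons]
      congr 1
      funext x
      simp only [Function.comp_apply, Nat.succ_eq_add_one]
      rw [hb]
      ring

lemma block_last {t : ℕ} : ∀ {B : List ℕ}, B.Chain' (fun a b => b = a + t) → B ≠ [] →
    B.getLastD 0 = B.headD 0 + (B.length - 1) * t := by
  intro B
  induction B with
  | nil => intro _ h; exact absurd rfl h
  | cons a l ih =>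
    intro h _
    cases l with
    | nil => simp
    | cons b l' =>
      have hb : b = a + t := (List.isChain_cons_cons.1 h).1
      have ihl := ih h.tail (by simp)
      have h1 : (a :: b :: l').getLastD 0 = (b :: l').getLastD 0 := rfl
      rw [h1, ihl]
      simp only [List.headD_cons, List.length_cons]
      rw [hb]
      have : l'.length + 1 + 1 - 1 = (l'.length + 1 - 1) + 1 := by omega
      rw [this]
      ring

lemma block_bounds {t : ℕ} {B : List ℕ} (h : B.Chain' (fun a b => b = a + t))
    {x : ℕ} (hx : x ∈ B) : B.headD 0 ≤ x ∧ x ≤ B.getLastD 0 := by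
  have hne : B ≠ [] := by rintro rfl; simp at hx
  rw [block_canon h] at hx
  rcases List.mem_map.1 hx with ⟨a, ha, rfl⟩
  rw [List.mem_range] at ha
  rw [block_last h hne]
  constructor
  · omega
  · have : a * t ≤ (B.length - 1) * t := Nat.mul_le_mul_right t (by omega)
    omega

lemma block_mem_iff {t : ℕ} {B : List ℕ} (h : B.Chain' (fun a b => b = a + t))
    {x : ℕ} : x ∈ B ↔ ∃ a < B.length, x = B.headD 0 + a * t := by
  constructor
  · intro hx
    rw [block_canon h] at hx
    rcases List.mem_map.1 hx with ⟨a, ha, rfl⟩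
    exact ⟨a, List.mem_range.1 ha, rfl⟩
  · rintro ⟨a, ha, rfl⟩
    conv_lhs => rw [block_canon h]
    exact List.mem_map.2 ⟨a, List.mem_range.2 ha, rfl⟩



lemma nil_not_mem {t : ℕ} {Bs : List (List ℕ)} (hB : ∀ B ∈ Bs, IsBlock t B) :
    [] ∉ Bs := fun h => (hB [] h).1 rfl

lemma decomp_chain' {t : ℕ} {A : List ℕ} {Bs : List (List ℕ)}
    (hd : IsBlockDecomp t A Bs) : A.Chain' (fun a b => a + t ≤ b) := by
  obtain ⟨rfl, hB, hch⟩ := hd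
  rw [List.Chain', List.isChain_flatten (nil_not_mem hB)]
  constructor
  · intro l hl
    exact ((hB l hl).2).imp (fun h => by omega)
  · exact hch.imp (fun B C h x hx y hy => le_of_lt (h x hx y hy))

lemma decomp_adj {t : ℕ} {A : List ℕ} {Bs : List (List ℕ)}
    (hd : IsBlockDecomp t A Bs) {j : ℕ} (hj : j + 1 < Bs.length) :
    (Bs[j]'(by omega)).getLastD 0 + t < (Bs[j+1]'hj).headD 0 := by
  have h := List.isChain_iff_getElem.1 hd.2.2 j (by omega)
  have h1 : Bs.get ⟨j, by omega⟩ = Bs[j]'(by omega) := rfl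
  have h2 : Bs.get ⟨j+1, by omega⟩ = Bs[j+1]'hj := rfl
  have hne1 : (Bs[j]'(by omega)) ≠ [] := (hd.2.1 _ (List.getElem_mem _)).1
  have hne2 : (Bs[j+1]'hj) ≠ [] := (hd.2.1 _ (List.getElem_mem _)).1
  exact h _ (by rw [getLast?_eq hne1]; rfl) _ (by rw [head?_eq hne2]; rfl)

lemma blocks_lt {t : ℕ} {A : List ℕ} {Bs : List (List ℕ)}
    (hd : IsBlockDecomp t A Bs) {l j : ℕ} (hl : l < Bs.length) (hj : j < Bs.length)
    (hlj : l < j) {x y : ℕ} (hx : x ∈ Bs[l]'hl) (hy : y ∈ Bs[j]'hj) : x + t < y := by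
  have hxle : x ≤ (Bs[l]'hl).getLastD 0 :=
    (block_bounds (hd.2.1 _ (List.getElem_mem _)).2 hx).2
  have hadj := decomp_adj hd (show l + 1 < Bs.length by omega)
  have hhead : (Bs[l+1]'(by omega)).headD 0 ≤ y := by
    rcases Nat.eq_or_lt_of_le (Nat.succ_le_of_lt hlj) with heq | hlt
    · have : Bs[l+1]'(by omega) = Bs[j]'hj := by subst heq; rfl
      rw [this]
      exact (block_bounds (hd.2.1 _ (List.getElem_mem _)).2 hy).1
    · -- l+1 < j : use pairwise of flatten
      have hpw := tspread_pairwise (decomp_chain' hd)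
      rw [hd.1, List.pairwise_flatten] at hpw
      have hkey := (List.pairwise_iff_getElem.1 hpw.2) (l+1) j (by omega) hj hlt
      have hm : (Bs[l+1]'(by omega)).headD 0 ∈ Bs[l+1]'(by omega) :=
        headD_mem (hd.2.1 _ (List.getElem_mem _)).1
      have := hkey _ hm _ hy
      omega
  omega

lemma mem_decomp_iff {t : ℕ} {A : List ℕ} {Bs : List (List ℕ)}
    (hd : IsBlockDecomp t A Bs) {x : ℕ} :
    x ∈ A ↔ ∃ l, ∃ hl : l < Bs.length, x ∈ Bs[l]'hl := by
  rw [hd.1, List.mem_flatten]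
  constructor
  · rintro ⟨B, hB, hx⟩
    rcases List.mem_iff_get.1 hB with ⟨⟨l, hl⟩, rfl⟩
    exact ⟨l, hl, hx⟩
  · rintro ⟨l, hl, hx⟩
    exact ⟨_, List.getElem_mem _, hx⟩

lemma exists_decomp {t : ℕ} : ∀ {l : List ℕ}, l.Chain' (fun a b => a + t ≤ b) →
    ∃ Bs, IsBlockDecomp t l Bs := by
  intro l
  induction l with
  | nil => exact fun _ => ⟨[], rfl, by simp, List.isChain_nil⟩
  | cons a l ih =>
    intro h
    rcases ih h.tail with ⟨Bs, hflat, hblocks, hchain⟩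
    cases l with
    | nil =>
      refine ⟨[[a]], by simp, ?_, List.isChain_singleton _⟩
      intro B hB
      rw [List.mem_singleton] at hB
      subst hB
      exact ⟨by simp, List.isChain_singleton _⟩
    | cons b l' =>
      have hab : a + t ≤ b := (List.isChain_cons_cons.1 h).1
      cases Bs with
      | nil => simp at hflat
      | cons B Bs' =>
        have hBne : B ≠ [] := (hblocks B (by simp)).1
        have hBhead : B.headD 0 = b := by
          have : (B :: Bs').flatten = b :: l' := hflat.symm
          cases B with
          | nil => exact absurd rfl hBne
          | cons x xs =>
            simp only [List.flatten_cons, List.cons_append] at this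
            simpa using congrArg (fun l => l.headD 0) this
        by_cases hmerge : b = a + t
        · refine ⟨(a :: B) :: Bs', ?_, ?_, ?_⟩
          · simp only [List.flatten_cons] at hflat ⊢
            rw [List.cons_append, ← hflat]
          · rintro C hC
            rcases List.mem_cons.1 hC with rfl | hC'
            · refine ⟨by simp, ?_⟩
              rw [List.Chain', List.isChain_cons]
              refine ⟨?_, (hblocks B (by simp)).2⟩
              intro y hy
              rw [head?_eq hBne] at hy
              cases hy
              rw [hBhead, hmerge]
            · exact hblocks C (by simp [hC'])
          · rw [List.Chain', List.isChain_cons] at hchain ⊢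
            refine ⟨?_, hchain.2⟩
            intro C hC x hx y hy
            refine hchain.1 C hC x ?_ y hy
            cases B with
            | nil => exact absurd rfl hBne
            | cons z zs => rw [List.getLast?_cons_cons] at hx; exact hx
        · refine ⟨[a] :: B :: Bs', ?_, ?_, ?_⟩
          · simp only [List.flatten_cons] at hflat ⊢
            rw [List.cons_append, ← hflat]
            simp
          · rintro C hC
            rcases List.mem_cons.1 hC with rfl | hC'
            · exact ⟨by simp, List.isChain_singleton _⟩
            · exact hblocks C hC'
          · rw [List.Chain', List.isChain_cons]
            refine ⟨?_, hchain⟩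
            intro C hC x hx y hy
            rw [List.head?_cons, Option.mem_some_iff] at hC
            subst hC
            simp only [List.getLast?_singleton, Option.mem_some_iff] at hx
            subst hx
            rw [head?_eq hBne, Option.mem_some_iff] at hy
            subst hy
            rw [hBhead]
            omega


def run (t m L : ℕ) : List ℕ := (List.range L).map (fun a => m + a * t)

lemma mem_run {t m L x : ℕ} : x ∈ run t m L ↔ ∃ a < L, x = m + a * t := by
  simp only [run, List.mem_map, List.mem_range]
  constructor
  · rintro ⟨a, ha, rfl⟩; exact ⟨a, ha, rfl⟩
  · rintro ⟨a, ha, rfl⟩; exact ⟨a, ha, rfl⟩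

lemma run_length {t m L : ℕ} : (run t m L).length = L := by simp [run]

lemma run_le_block {t : ℕ} : ∀ {Bs : List (List ℕ)} {A : List ℕ},
    IsBlockDecomp t A Bs → ∀ {m L : ℕ}, L ≠ 0 →
    (↑(run t m L) : Multiset ℕ) ≤ ↑A →
    ∃ j, ∃ hj : j < Bs.length, (↑(run t m L) : Multiset ℕ) ≤ ↑(Bs[j]'hj) := by
  intro Bs
  induction Bs with
  | nil =>
    intro A hd m L hL hle
    rw [hd.1] at hle
    simp only [List.flatten_nil] at hle
    have : m ∈ run t m L := mem_run.2 ⟨0, Nat.pos_of_ne_zero hL, by ring⟩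
    have : (m : ℕ) ∈ (↑(run t m L) : Multiset ℕ) := by simpa using this
    have := Multiset.mem_of_le hle this
    simp at this
  | cons B₀ rest ih =>
    intro A hd m L hL hle
    obtain ⟨hA, hblocks, hchain⟩ := hd
    have hd' : IsBlockDecomp t A (B₀ :: rest) := ⟨hA, hblocks, hchain⟩
    have hB0 : IsBlock t B₀ := hblocks B₀ List.mem_cons_self
    have hrestd : IsBlockDecomp t rest.flatten rest :=
      ⟨rfl, fun B hB => hblocks B (List.mem_cons_of_mem _ hB), hchain.tail⟩
    set g := B₀.getLastD 0 with hg
    have hgmem : g ∈ B₀ := getLastD_mem hB0.1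
    have hrest_gt : ∀ y ∈ rest.flatten, g + t < y := by
      intro y hy
      rcases (mem_decomp_iff hrestd).1 hy with ⟨j, hj, hyj⟩
      have : rest[j]'hj = (B₀ :: rest)[j+1]'(by simpa using Nat.succ_lt_succ hj) := rfl
      exact blocks_lt hd' (l := 0) (j := j+1) (by simp) (by simpa using Nat.succ_lt_succ hj)
        (Nat.succ_pos _) hgmem (this ▸ hyj)
    have hcountA : ∀ x, (run t m L).count x ≤ B₀.count x + rest.flatten.count x := by
      intro x
      have := Multiset.count_le_of_le x hle
      rw [hA] at this
      simpa [List.count_append] using this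
    by_cases hmg : m ≤ g
    · by_cases hend : m + (L-1) * t ≤ g
      · -- all of the run fits below g, so it avoids rest
        refine ⟨0, by simp, ?_⟩
        rw [Multiset.le_iff_count]
        intro x
        rcases Nat.eq_zero_or_pos ((run t m L).count x) with h0 | hpos
        · simp [Multiset.coe_count, h0]
        · have hxmem : x ∈ run t m L := List.count_pos_iff.1 hpos
          rcases mem_run.1 hxmem with ⟨a, ha, rfl⟩
          have hxg : m + a * t ≤ g := by
            have : a * t ≤ (L-1) * t := Nat.mul_le_mul_right t (by omega)
            omega
          have hnot : (m + a * t) ∉ rest.flatten := fun hmem => by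
            have := hrest_gt _ hmem; omega
          have : rest.flatten.count (m + a * t) = 0 := List.count_eq_zero.2 hnot
          have := hcountA (m + a * t)
          simp only [Multiset.coe_count, List.getElem_cons_zero]
          omega
      · -- contradiction
        exfalso
        have hL1 : 1 ≤ L := Nat.pos_of_ne_zero hL
        set P : ℕ → Prop := fun a => m + a * t ≤ g with hP
        have hP0 : P 0 := by simpa [hP] using hmg
        set a' := Nat.findGreatest P (L-1) with ha'
        have hPa' : P a' := Nat.findGreatest_spec (Nat.zero_le _) hP0
        have ha'le : a' ≤ L - 1 := Nat.findGreatest_le _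
        have ha'lt : a' < L - 1 := by
          rcases Nat.lt_or_ge a' (L-1) with h | h
          · exact h
          · exfalso; apply hend
            have : a' = L - 1 := le_antisymm ha'le h
            rw [← this]; exact hPa'
        have hnP : ¬ P (a' + 1) :=
          Nat.findGreatest_is_greatest (Nat.lt_succ_self _) (by omega)
        have hxg : g < m + (a'+1) * t := by simpa [hP] using hnP
        have hmul : (a'+1) * t = a' * t + t := by ring
        have hzmem : (m + a' * t) ∈ A := by
          have : (m + a' * t) ∈ run t m L := mem_run.2 ⟨a', by omega, rfl⟩
          exact Multiset.mem_of_le hle (by simpa using this)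
        have hxmemA : (m + (a'+1) * t) ∈ A := by
          have : (m + (a'+1) * t) ∈ run t m L := mem_run.2 ⟨a'+1, by omega, rfl⟩
          exact Multiset.mem_of_le hle (by simpa using this)
        have hzB0 : (m + a' * t) ∈ B₀ := by
          rw [hA, List.flatten_cons, List.mem_append] at hzmem
          rcases hzmem with h | h
          · exact h
          · exfalso
            have := hrest_gt _ h
            have : m + a' * t ≤ g := hPa'
            omega
        have hxrest : (m + (a'+1) * t) ∈ rest.flatten := by
          rw [hA, List.flatten_cons, List.mem_append] at hxmemA
          rcases hxmemA with h | h
          · exfalso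
            have := (block_bounds hB0.2 h).2
            omega
          · exact h
        rcases (mem_decomp_iff hrestd).1 hxrest with ⟨j, hj, hyj⟩
        have heq : rest[j]'hj = (B₀ :: rest)[j+1]'(by simpa using Nat.succ_lt_succ hj) := rfl
        have := blocks_lt hd' (l := 0) (j := j+1) (by simp)
          (by simpa using Nat.succ_lt_succ hj) (Nat.succ_pos _) hzB0 (heq ▸ hyj)
        omega
    · -- g < m : everything is in rest
      push_neg at hmg
      have hsub : (↑(run t m L) : Multiset ℕ) ≤ ↑rest.flatten := by
        rw [Multiset.le_iff_count]
        intro x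
        rcases Nat.eq_zero_or_pos ((run t m L).count x) with h0 | hpos
        · simp [Multiset.coe_count, h0]
        · have hxmem : x ∈ run t m L := List.count_pos_iff.1 hpos
          rcases mem_run.1 hxmem with ⟨a, ha, rfl⟩
          have hnot : (m + a * t) ∉ B₀ := fun hmem => by
            have := (block_bounds hB0.2 hmem).2
            omega
          have : B₀.count (m + a * t) = 0 := List.count_eq_zero.2 hnot
          have := hcountA (m + a * t)
          simp only [Multiset.coe_count]
          omega
      rcases ih hrestd hL hsub with ⟨j, hj, hle'⟩
      exact ⟨j+1, by simpa using Nat.succ_lt_succ hj, hle'⟩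


lemma head_cons_eq {B : List ℕ} (h : B ≠ []) : B = B.headD 0 :: B.tail := by
  cases B with
  | nil => exact absurd rfl h
  | cons a l => rfl

lemma u_split_at {t : ℕ} {A : List ℕ} {Bs : List (List ℕ)}
    (hd : IsBlockDecomp t A Bs) {j : ℕ} (hj : j < Bs.length) :
    A = (Bs.take j).flatten ++ (Bs[j]'hj) ++ (Bs.drop (j+1)).flatten := by
  conv_lhs => rw [hd.1, ← List.take_append_drop j Bs]
  rw [List.flatten_append, List.drop_eq_getElem_cons hj, List.flatten_cons,
    List.append_assoc]

lemma mem_take_flatten {Bs : List (List ℕ)} {j : ℕ} {y : ℕ}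
    (hy : y ∈ (Bs.take j).flatten) : ∃ l, ∃ hl : l < Bs.length, l < j ∧ y ∈ Bs[l]'hl := by
  rcases List.mem_flatten.1 hy with ⟨C, hC, hyC⟩
  rcases List.mem_iff_getElem.1 hC with ⟨l, hl, rfl⟩
  have hl' : l < j := by
    have := hl; rw [List.length_take] at this; omega
  have hlB : l < Bs.length := by
    have := hl; rw [List.length_take] at this; omega
  exact ⟨l, hlB, hl', by rw [← List.getElem_take (xs := Bs) (h := hl)]; exact hyC⟩

lemma mem_drop_flatten {Bs : List (List ℕ)} {j : ℕ} {y : ℕ}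
    (hy : y ∈ (Bs.drop j).flatten) : ∃ l, ∃ hl : l < Bs.length, j ≤ l ∧ y ∈ Bs[l]'hl := by
  rcases List.mem_flatten.1 hy with ⟨C, hC, hyC⟩
  rcases List.mem_iff_getElem.1 hC with ⟨l, hl, rfl⟩
  have hlB : j + l < Bs.length := by
    have := hl; rw [List.length_drop] at this; omega
  refine ⟨j + l, hlB, by omega, ?_⟩
  rw [← List.getElem_drop (xs := Bs) (h := hl)]; exact hyC

lemma mem_split_bound {t : ℕ} {A : List ℕ} {Bs : List (List ℕ)}
    (hd : IsBlockDecomp t A Bs) {j : ℕ} (hj : j + 1 < Bs.length) {x : ℕ} (hx : x ∈ A) :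
    x ≤ (Bs[j]'(by omega)).getLastD 0 ∨ (Bs[j+1]'hj).headD 0 ≤ x := by
  rcases (mem_decomp_iff hd).1 hx with ⟨l, hl, hxl⟩
  rcases Nat.lt_or_ge l (j+1) with hlj | hlj
  · left
    rcases Nat.eq_or_lt_of_le (Nat.lt_succ_iff.1 hlj) with rfl | hlt
    · exact (block_bounds (hd.2.1 _ (List.getElem_mem _)).2 hxl).2
    · have hM : (Bs[j]'(by omega)).getLastD 0 ∈ Bs[j]'(by omega) :=
        getLastD_mem (hd.2.1 _ (List.getElem_mem _)).1
      have := blocks_lt hd hl (by omega) hlt hxl hM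
      omega
  · right
    rcases Nat.eq_or_lt_of_le hlj with rfl | hlt
    · exact (block_bounds (hd.2.1 _ (List.getElem_mem _)).2 hxl).1
    · have hm : (Bs[j+1]'hj).headD 0 ∈ Bs[j+1]'hj :=
        headD_mem (hd.2.1 _ (List.getElem_mem _)).1
      have := blocks_lt hd hj hl hlt hm hxl
      omega

lemma run_zero_eq {m L : ℕ} : run 0 m L = List.replicate L m := by
  refine List.eq_replicate_iff.2 ⟨run_length, ?_⟩
  intro b hb
  rcases mem_run.1 hb with ⟨a, _, rfl⟩
  simp

lemma run_nodup {t m L : ℕ} (ht : 1 ≤ t) : (run t m L).Nodup := by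
  refine List.Nodup.map_on ?_ List.nodup_range
  intro a ha b hb hab
  have : a * t = b * t := by omega
  exact Nat.eq_of_mul_eq_mul_right (by omega) this

lemma run_sublist {t m L L' : ℕ} (h : L ≤ L') : (run t m L).Sublist (run t m L') :=
  (List.range_sublist.2 h).map _

lemma lex_mid : ∀ (P : List ℕ) {i k : ℕ} {S S' : List ℕ}, i < k →
    List.Lex (· < ·) (P ++ i :: S) (P ++ k :: S') := by
  intro P
  induction P with
  | nil => intro i k S S' h; exact List.Lex.rel h
  | cons a P' ih => intro i k S S' h; exact List.Lex.cons (ih h)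

lemma notbounded_run {t c : ℕ} {v : List ℕ} {Bs' : List (List ℕ)}
    (hd' : IsBlockDecomp t v Bs') {B : List ℕ} (hB : B ∈ Bs') (hlen : c < B.length) :
    (↑(run t (B.headD 0) (c+1)) : Multiset ℕ) ≤ ↑v := by
  have hblock := hd'.2.1 B hB
  have hcanon : B = run t (B.headD 0) B.length := block_canon hblock.2
  have h1 : (run t (B.headD 0) (c+1)).Sublist B := by
    conv_rhs => rw [hcanon]
    exact run_sublist (by omega)
  have h2 : B.Sublist v := by
    rw [hd'.1]
    exact List.sublist_flatten_of_mem hB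
  exact Multiset.coe_le.2 (h1.trans h2).subperm

lemma run_hits_i {t c : ℕ} {u : List ℕ} {Bs : List (List ℕ)}
    (hd : IsBlockDecomp t u Bs) (hcb : CBounded c t u) {i k m : ℕ}
    (hle : (↑(run t m (c+1)) : Multiset ℕ) ≤ i ::ₘ ((↑u : Multiset ℕ).erase k)) :
    ∃ a ≤ c, i = m + a * t := by
  by_cases hsub : (↑(run t m (c+1)) : Multiset ℕ) ≤ ↑u
  · exfalso
    rcases run_le_block hd (by omega) hsub with ⟨j, hj, hlej⟩
    have hcard := Multiset.card_le_card hlej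
    simp only [Multiset.coe_card, run_length] at hcard
    have := hcb Bs hd _ (List.getElem_mem hj)
    omega
  · rw [Multiset.le_iff_count] at hsub
    push_neg at hsub
    rcases hsub with ⟨x, hx⟩
    have hcount := Multiset.count_le_of_le x hle
    rw [Multiset.count_cons] at hcount
    have herase : Multiset.count x ((↑u : Multiset ℕ).erase k) ≤ Multiset.count x (↑u : Multiset ℕ) :=
      Multiset.count_le_of_le x (Multiset.erase_le _ _)
    have hxi : x = i := by
      by_contra hne
      simp only [if_neg hne] at hcount
      omega
    subst hxi
    have hpos : 0 < Multiset.count x (↑(run t m (c+1)) : Multiset ℕ) := by omega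
    have hmem : x ∈ run t m (c+1) := by
      rw [Multiset.coe_count] at hpos
      exact List.count_pos_iff.1 hpos
    rcases mem_run.1 hmem with ⟨a, ha, rfl⟩
    exact ⟨a, by omega, rfl⟩

lemma step_up_contra {t : ℕ} {u : List ℕ} {i k : ℕ} (ht : 1 ≤ t)
    (hpw : u.Pairwise (fun a b => a + t ≤ b)) (hku : k ∈ u) (hik : i < k)
    (hmem : (i + t) ∈ ((↑u : Multiset ℕ).erase k)) (hge : k ≤ i + t) : False := by
  have hnd : u.Nodup := spread_nodup ht hpw
  rcases Nat.eq_or_lt_of_le hge with heq | hlt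
  · -- i + t = k, but k is fully erased
    have : Multiset.count k ((↑u : Multiset ℕ).erase k) = 0 := by
      rw [Multiset.count_erase_self, Multiset.coe_count]
      have := List.nodup_iff_count_le_one.1 hnd k
      omega
    rw [← heq] at hmem
    have := Multiset.count_pos.2 hmem
    omega
  · have hmemu : (i + t) ∈ u := by
      have := Multiset.mem_of_le (Multiset.erase_le _ _) hmem
      exact this
    have := mem_ge_of_gt hpw hmemu hku hlt
    omega


end Stmt7

open Stmt7

/-- For a minimal generator `u` of `I = I_{c,(n,d,t)}` with
maximal block decomposition `B₁ ⊔ … ⊔ B_r`, an index `i` satisfies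
"there is `k > i` with `x_k ∣ u`, `x_i·u/x_k ∈ I` and `x_i·u/x_k >_lex u`"
iff `i` belongs to some gap interval of `u`: the `0`-th gap interval
`[1, min(B₁) - 1]`, or for `1 ≤ j ≤ r-1` the `j`-th gap interval, which is
`[max(B_j)+t, min(B_{j+1})-1]` if `|B_j| < c` and
`[max(B_j)+t+1, min(B_{j+1})-1]` if `|B_j| = c`.
(`u >_lex v` as monomials iff the ascending index list of `u` is
lexicographically smaller.) -/
theorem stmt_7 (c n d t : ℕ) (u : List ℕ) (hu : u ∈ Gen c n d t)
    (Bs : List (List ℕ)) (hBs : IsBlockDecomp t u Bs) (i : ℕ) :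
    (∃ k, i < k ∧ k ∈ u ∧ ∃ v ∈ Gen c n d t,
        (↑v : Multiset ℕ) = i ::ₘ ((↑u : Multiset ℕ).erase k) ∧
        List.Lex (· < ·) v u) ↔
      ((1 ≤ i ∧ i + 1 ≤ (Bs.getD 0 []).headD 0) ∨
        ∃ j, j + 1 < Bs.length ∧
          (Bs.getD j []).getLastD 0 + t +
              (if (Bs.getD j []).length = c then 1 else 0) ≤ i ∧
          i + 1 ≤ (Bs.getD (j + 1) []).headD 0) := by
  obtain ⟨hlen, hsp, hcb, hbounds⟩ := hu
  have hpw : u.Pairwise (fun a b => a + t ≤ b) := tspread_pairwise hsp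
  constructor
  · rintro ⟨k, hik, hku, v, ⟨hvlen, hvsp, hvcb, hvbounds⟩, hveq, -⟩
    have hvpw := tspread_pairwise hvsp
    have hune : u ≠ [] := List.ne_nil_of_mem hku
    have hBsne : Bs ≠ [] := by
      rintro rfl
      rw [hBs.1] at hune; simp at hune
    have hr : 0 < Bs.length := List.length_pos_iff.2 hBsne
    have hc1 : 1 ≤ c := by
      have h1 := hcb Bs hBs _ (List.getElem_mem hr)
      have h2 : (Bs[0]'hr) ≠ [] := (hBs.2.1 _ (List.getElem_mem hr)).1
      have := List.length_pos_iff.2 h2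
      omega
    have hiv : i ∈ v := by
      have : i ∈ (↑v : Multiset ℕ) := by rw [hveq]; exact Multiset.mem_cons_self _ _
      simpa using this
    have hi1 : 1 ≤ i := (hvbounds i hiv).1
    by_cases h0 : i + 1 ≤ (Bs.getD 0 []).headD 0
    · exact Or.inl ⟨hi1, h0⟩
    right
    push_neg at h0
    rw [List.getD_eq_getElem _ _ hr] at h0
    have hcountv : ∀ x, Multiset.count x (↑v : Multiset ℕ)
        = Multiset.count x ((↑u : Multiset ℕ).erase k) + if x = i then 1 else 0 := by
      intro x; rw [hveq, Multiset.count_cons]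
    have collision : ∀ p, p ∈ u → p ≤ i → i < p + t → False := by
      intro p hpu hpi hpt
      rcases Nat.eq_or_lt_of_le hpi with rfl | hlt
      · have ht1 : 1 ≤ t := by omega
        have hnd : v.Nodup := spread_nodup ht1 hvpw
        have h2 : 2 ≤ Multiset.count p (↑v : Multiset ℕ) := by
          rw [hcountv, if_pos rfl, Multiset.count_erase_of_ne (by omega), Multiset.coe_count]
          have := List.count_pos_iff.2 hpu
          omega
        rw [Multiset.coe_count] at h2
        have := List.nodup_iff_count_le_one.1 hnd p
        omega
      · have hpv : p ∈ v := by
          have hcp : 0 < Multiset.count p (↑v : Multiset ℕ) := by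
            rw [hcountv, Multiset.count_erase_of_ne (by omega), Multiset.coe_count]
            have := List.count_pos_iff.2 hpu
            omega
          rw [Multiset.coe_count] at hcp
          exact List.count_pos_iff.1 hcp
        rcases pairwise_two hvpw hpv hiv (by omega) with h | h
        · omega
        · omega
    have hQ0 : (Bs.getD 0 []).headD 0 ≤ i := by
      rw [List.getD_eq_getElem _ _ hr]; omega
    set j : ℕ := Nat.findGreatest (fun j => (Bs.getD j []).headD 0 ≤ i) (Bs.length - 1)
      with hjdef
    have hjle : j ≤ Bs.length - 1 := Nat.findGreatest_le _
    have hjr : j < Bs.length := by omega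
    have hQj : (Bs.getD j []).headD 0 ≤ i :=
      Nat.findGreatest_spec (P := fun j => (Bs.getD j []).headD 0 ≤ i) (m := 0)
        (Nat.zero_le _) hQ0
    rw [List.getD_eq_getElem _ _ hjr] at hQj
    have hBj := hBs.2.1 _ (List.getElem_mem hjr)
    have hBjne := hBj.1
    have hBjlen : 0 < (Bs[j]'hjr).length := List.length_pos_iff.2 hBjne
    have hMeq : (Bs[j]'hjr).getLastD 0
        = (Bs[j]'hjr).headD 0 + ((Bs[j]'hjr).length - 1) * t := block_last hBj.2 hBjne
    have hcol : ¬ i < (Bs[j]'hjr).getLastD 0 + t := by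
      intro hMt
      have hQ20 : (Bs[j]'hjr).headD 0 + 0 * t ≤ i := by simpa using hQj
      set a : ℕ := Nat.findGreatest (fun a => (Bs[j]'hjr).headD 0 + a * t ≤ i)
        ((Bs[j]'hjr).length - 1) with hadef
      have hale : a ≤ (Bs[j]'hjr).length - 1 := Nat.findGreatest_le _
      have hQa : (Bs[j]'hjr).headD 0 + a * t ≤ i :=
        Nat.findGreatest_spec (P := fun a => (Bs[j]'hjr).headD 0 + a * t ≤ i) (m := 0)
          (Nat.zero_le _) hQ20
      have hpB : (Bs[j]'hjr).headD 0 + a * t ∈ (Bs[j]'hjr) :=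
        (block_mem_iff hBj.2).2 ⟨a, by omega, rfl⟩
      have hpu : (Bs[j]'hjr).headD 0 + a * t ∈ u := (mem_decomp_iff hBs).2 ⟨j, hjr, hpB⟩
      have hstep : i < (Bs[j]'hjr).headD 0 + a * t + t := by
        rcases Nat.eq_or_lt_of_le hale with heq | hlt2
        · have h2 : a * t = ((Bs[j]'hjr).length - 1) * t := by rw [heq]
          omega
        · have hng := Nat.findGreatest_is_greatest
            (P := fun a => (Bs[j]'hjr).headD 0 + a * t ≤ i)
            (n := (Bs[j]'hjr).length - 1) (k := a + 1)
            (by rw [← hadef]; omega) (by omega)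
          have hng' : ¬ ((Bs[j]'hjr).headD 0 + (a + 1) * t ≤ i) := hng
          have hmul : (a + 1) * t = a * t + t := by ring
          omega
      exact collision _ hpu hQa hstep
    push_neg at hcol
    have hjlast : j + 1 < Bs.length := by
      by_contra hlast
      rcases (mem_decomp_iff hBs).1 hku with ⟨l, hl, hkl⟩
      have hlj : l ≤ j := by omega
      rcases Nat.eq_or_lt_of_le hlj with rfl | hlt
      · have := (block_bounds hBj.2 hkl).2
        omega
      · have hmem : (Bs[j]'hjr).headD 0 ∈ Bs[j]'hjr := headD_mem hBjne
        have := blocks_lt hBs hl hjr hlt hkl hmem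
        omega
    have hmax : i + 1 ≤ (Bs[j+1]'hjlast).headD 0 := by
      have hng := Nat.findGreatest_is_greatest
        (P := fun j => (Bs.getD j []).headD 0 ≤ i) (n := Bs.length - 1)
        (k := j + 1) (by rw [← hjdef]; omega) (by omega)
      have hng' : ¬ ((Bs.getD (j + 1) []).headD 0 ≤ i) := hng
      rw [List.getD_eq_getElem _ _ hjlast] at hng'
      omega
    have hnotfull : ¬ ((Bs[j]'hjr).length = c ∧ i = (Bs[j]'hjr).getLastD 0 + t) := by
      rintro ⟨hsc, hieq⟩
      have e1 : (Bs[j]'hjr).length * t = ((Bs[j]'hjr).length - 1) * t + t := by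
        conv_lhs => rw [show (Bs[j]'hjr).length = ((Bs[j]'hjr).length - 1) + 1 by omega]
        rw [Nat.succ_mul]
      have hrunle : (↑(run t ((Bs[j]'hjr).headD 0) (c+1)) : Multiset ℕ) ≤ ↑v := by
        rw [Multiset.le_iff_count]
        intro x
        by_cases hxmem : x ∈ run t ((Bs[j]'hjr).headD 0) (c+1)
        · rcases mem_run.1 hxmem with ⟨a, ha, rfl⟩
          rcases Nat.eq_zero_or_pos t with ht0 | ht1
          · subst ht0
            have hxm : (Bs[j]'hjr).headD 0 + a * 0 = (Bs[j]'hjr).headD 0 := by ring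
            have hieq' : i = (Bs[j]'hjr).headD 0 := by omega
            have h1 : (Bs[j]'hjr) = List.replicate c ((Bs[j]'hjr).headD 0) := by
              conv_lhs => rw [block_canon hBj.2]
              rw [show ((List.range (Bs[j]'hjr).length).map
                  (fun a => (Bs[j]'hjr).headD 0 + a * 0)) = run 0 ((Bs[j]'hjr).headD 0)
                  (Bs[j]'hjr).length from rfl, run_zero_eq, hsc]
            have hsub : (Bs[j]'hjr).Sublist u := by
              rw [hBs.1]; exact List.sublist_flatten_of_mem (List.getElem_mem hjr)
            rw [h1] at hsub
            have hcu : c ≤ u.count ((Bs[j]'hjr).headD 0) := by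
              have h2 := hsub.count_le ((Bs[j]'hjr).headD 0)
              rw [List.count_replicate_self] at h2
              exact h2
            have hcount_run : (run 0 ((Bs[j]'hjr).headD 0) (c+1)).count
                ((Bs[j]'hjr).headD 0 + a * 0) ≤ c + 1 := by
              have := List.count_le_length
                (l := run 0 ((Bs[j]'hjr).headD 0) (c+1)) (a := (Bs[j]'hjr).headD 0 + a * 0)
              rw [run_length] at this
              exact this
            have hcv : c + 1 ≤ Multiset.count ((Bs[j]'hjr).headD 0 + a * 0) (↑v : Multiset ℕ) := by
              rw [hcountv, if_pos (by omega), Multiset.count_erase_of_ne (by omega),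
                Multiset.coe_count]
              rw [hxm]
              omega
            rw [Multiset.coe_count]
            omega
          · have hnd := run_nodup (t := t) (m := (Bs[j]'hjr).headD 0) (L := c+1) ht1
            have hc_run : (run t ((Bs[j]'hjr).headD 0) (c+1)).count
                ((Bs[j]'hjr).headD 0 + a * t) ≤ 1 :=
              List.nodup_iff_count_le_one.1 hnd _
            have hcv : 1 ≤ Multiset.count ((Bs[j]'hjr).headD 0 + a * t) (↑v : Multiset ℕ) := by
              rcases Nat.lt_or_ge a c with hac | hac
              · have hxB : (Bs[j]'hjr).headD 0 + a * t ∈ (Bs[j]'hjr) :=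
                  (block_mem_iff hBj.2).2 ⟨a, by omega, rfl⟩
                have hxu : (Bs[j]'hjr).headD 0 + a * t ∈ u :=
                  (mem_decomp_iff hBs).2 ⟨j, hjr, hxB⟩
                have hxle : (Bs[j]'hjr).headD 0 + a * t ≤ (Bs[j]'hjr).getLastD 0 :=
                  (block_bounds hBj.2 hxB).2
                rw [hcountv, Multiset.count_erase_of_ne (by omega), Multiset.coe_count]
                have := List.count_pos_iff.2 hxu
                omega
              · have hac' : a = c := by omega
                subst hac'
                have hxi : (Bs[j]'hjr).headD 0 + a * t = i := by
                  rw [hieq, hMeq, ← hsc]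
                  omega
                rw [hcountv, if_pos hxi]
                omega
            rw [Multiset.coe_count]
            omega
        · rw [Multiset.coe_count, List.count_eq_zero.2 hxmem]
          exact Nat.zero_le _
      rcases exists_decomp hvsp with ⟨Bs', hd'⟩
      rcases run_le_block hd' (by omega) hrunle with ⟨jj, hjj, hlej⟩
      have hcard := Multiset.card_le_card hlej
      simp only [Multiset.coe_card, run_length] at hcard
      have := hvcb Bs' hd' _ (List.getElem_mem hjj)
      omega
    refine ⟨j, hjlast, ?_, ?_⟩
    · rw [List.getD_eq_getElem _ _ hjr]
      by_cases hsc : (Bs[j]'hjr).length = c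
      · rw [if_pos hsc]
        have : i ≠ (Bs[j]'hjr).getLastD 0 + t := fun h => hnotfull ⟨hsc, h⟩
        omega
      · rw [if_neg hsc]; omega
    · rw [List.getD_eq_getElem _ _ hjlast]; exact hmax
  · rintro (⟨hi1, h0⟩ | ⟨j, hjlast, hlow, hhigh⟩)
    · -- Case 0 : i is below the first block
      have hBsne : Bs ≠ [] := by rintro rfl; simp at h0
      have hr : 0 < Bs.length := List.length_pos_iff.2 hBsne
      rw [List.getD_eq_getElem _ _ hr] at h0
      have hB0 := hBs.2.1 _ (List.getElem_mem hr)
      have hB0ne := hB0.1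
      have hc1 : 1 ≤ c := by
        have h1 := hcb Bs hBs _ (List.getElem_mem hr)
        have := List.length_pos_iff.2 hB0ne
        omega
      set m0 := (Bs[0]'hr).headD 0 with hm0
      set S : List ℕ := (Bs[0]'hr).tail ++ (Bs.drop 1).flatten with hSdef
      have husplit : u = m0 :: S := by
        have h1 := u_split_at hBs hr
        rw [List.take_zero, List.flatten_nil, List.nil_append] at h1
        rw [h1, hSdef]
        conv_lhs => rw [head_cons_eq hB0ne]
        rw [List.cons_append]
      have hm0u : m0 ∈ u := by rw [husplit]; exact List.mem_cons_self
      have hm0min : ∀ x ∈ u, m0 ≤ x := by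
        intro x hx
        have h2 := head_min hsp hx
        have h3 : u.headD 0 = m0 := by rw [husplit]; rfl
        omega
      have hveq2 : (↑(i :: S) : Multiset ℕ) = i ::ₘ ((↑u : Multiset ℕ).erase m0) := by
        rw [husplit]
        have h4 : ((↑(m0 :: S) : Multiset ℕ)).erase m0 = ↑S := by
          rw [← Multiset.cons_coe, Multiset.erase_cons_head]
        rw [h4, Multiset.cons_coe]
      refine ⟨m0, by omega, hm0u, ⟨i :: S, ⟨?_, ?_, ?_, ?_⟩, hveq2, ?_⟩⟩
      · have h5 := hlen
        rw [husplit] at h5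
        simpa using h5
      · have hsp' := hsp
        rw [husplit] at hsp'
        obtain ⟨hh, htail⟩ := List.isChain_cons.1 hsp'
        exact List.isChain_cons.2 ⟨fun y hy => by have := hh y hy; omega, htail⟩
      · -- CBounded
        intro Bs' hd' B hB
        by_contra hlen'
        push_neg at hlen'
        have hrunle := notbounded_run hd' hB hlen'
        rw [hveq2] at hrunle
        rcases run_hits_i hBs hcb hrunle with ⟨a0, ha0, hia⟩
        have hmem_of_ne : ∀ x, x ∈ run t (B.headD 0) (c+1) → x ≠ i →
            x ∈ ((↑u : Multiset ℕ).erase m0) := by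
          intro x hxr hxne
          have hxcnt := Multiset.count_le_of_le x hrunle
          rw [Multiset.count_cons, if_neg hxne, Multiset.coe_count] at hxcnt
          have hpos := List.count_pos_iff.2 hxr
          exact Multiset.count_pos.1 (by omega)
        rcases Nat.eq_zero_or_pos t with rfl | ht1
        · -- t = 0
          have hie : i = B.headD 0 := by simpa using hia
          have h1 : Multiset.count i (↑(run 0 (B.headD 0) (c+1)) : Multiset ℕ) = c + 1 := by
            rw [Multiset.coe_count, run_zero_eq, hie, List.count_replicate_self]
          have h2 := Multiset.count_le_of_le i hrunle
          rw [h1, Multiset.count_cons, if_pos rfl] at h2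
          have h3 : Multiset.count i ((↑u : Multiset ℕ).erase m0) ≤ u.count i := by
            have h6 := Multiset.count_le_of_le i (Multiset.erase_le m0 (↑u : Multiset ℕ))
            rw [Multiset.coe_count] at h6
            exact h6
          have hiu : i ∈ u := List.count_pos_iff.1 (by omega)
          have := hm0min i hiu
          omega
        · -- t ≥ 1
          rcases Nat.lt_or_ge a0 c with hac | hac
          · have hxmem : (B.headD 0 + (a0+1) * t) ∈ run t (B.headD 0) (c+1) :=
              mem_run.2 ⟨a0+1, by omega, rfl⟩
            have hmul : (a0+1)*t = a0*t + t := by ring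
            have hxne : B.headD 0 + (a0+1)*t ≠ i := by omega
            have hmemE := hmem_of_ne _ hxmem hxne
            have hit : B.headD 0 + (a0+1)*t = i + t := by omega
            rw [hit] at hmemE
            have hmemu : (i+t) ∈ u := by
              simpa using Multiset.mem_of_le (Multiset.erase_le _ _) hmemE
            exact step_up_contra ht1 hpw hm0u (by omega) hmemE (hm0min _ hmemu)
          · have hac' : a0 = c := by omega
            rw [hac'] at hia
            have hxmem : (B.headD 0 + (c-1) * t) ∈ run t (B.headD 0) (c+1) :=
              mem_run.2 ⟨c-1, by omega, rfl⟩
            have hmulc : c * t = (c-1)*t + t := by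
              conv_lhs => rw [show c = (c-1)+1 by omega, Nat.succ_mul]
            have hxne : B.headD 0 + (c-1)*t ≠ i := by omega
            have hmemE := hmem_of_ne _ hxmem hxne
            have hmemu : (B.headD 0 + (c-1)*t) ∈ u := by
              simpa using Multiset.mem_of_le (Multiset.erase_le _ _) hmemE
            have := hm0min _ hmemu
            omega
      · -- bounds
        intro x hx
        rcases List.mem_cons.1 hx with rfl | hx'
        · exact ⟨hi1, by have := (hbounds m0 hm0u).2; omega⟩
        · exact hbounds x (by rw [husplit]; exact List.mem_cons_of_mem _ hx')
      · -- lex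
        rw [husplit]
        exact List.Lex.rel (by omega)
    · -- Case j : i is in the j-th gap
      have hjr : j < Bs.length := by omega
      rw [List.getD_eq_getElem _ _ hjr] at hlow
      rw [List.getD_eq_getElem _ _ hjlast] at hhigh
      have hBj := hBs.2.1 _ (List.getElem_mem hjr)
      have hBjne := hBj.1
      have hBj1 := hBs.2.1 _ (List.getElem_mem hjlast)
      have hBj1ne := hBj1.1
      have hMmem : (Bs[j]'hjr).getLastD 0 ∈ Bs[j]'hjr := getLastD_mem hBjne
      have hc1 : 1 ≤ c := by
        have h1 := hcb Bs hBs _ (List.getElem_mem hjr)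
        have := List.length_pos_iff.2 hBjne
        omega
      have hlow' : (Bs[j]'hjr).getLastD 0 + t ≤ i := by
        by_cases hsc : (Bs[j]'hjr).length = c
        · rw [if_pos hsc] at hlow; omega
        · rw [if_neg hsc] at hlow; omega
      set m1 := (Bs[j+1]'hjlast).headD 0 with hm1def
      have hik : i < m1 := by omega
      set P : List ℕ := (Bs.take (j+1)).flatten with hPdef
      set S : List ℕ := (Bs[j+1]'hjlast).tail ++ (Bs.drop (j+2)).flatten with hSdef
      have husplit : u = P ++ m1 :: S := by
        rw [u_split_at hBs hjlast, List.append_assoc, hPdef]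
        congr 1
        conv_lhs => rw [head_cons_eq hBj1ne]
        rw [List.cons_append]
      have hm1u : m1 ∈ u := (mem_decomp_iff hBs).2 ⟨j+1, hjlast, headD_mem hBj1ne⟩
      have hsplitb : ∀ x ∈ u, x ≤ (Bs[j]'hjr).getLastD 0 ∨ m1 ≤ x := by
        intro x hx
        rcases mem_split_bound hBs hjlast hx with h | h
        · exact Or.inl h
        · exact Or.inr h
      have he : ∀ (x : ℕ), (↑(P ++ x :: S) : Multiset ℕ) = x ::ₘ ((↑P : Multiset ℕ) + ↑S) := by
        intro x
        rw [← Multiset.coe_add, ← Multiset.cons_coe, Multiset.add_cons]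
      have hveq2 : (↑(P ++ i :: S) : Multiset ℕ) = i ::ₘ ((↑u : Multiset ℕ).erase m1) := by
        rw [husplit, he i, he m1, Multiset.erase_cons_head]
      have hspl := hsp
      rw [husplit] at hspl
      obtain ⟨hchP, hchMS, hbd⟩ := List.isChain_append.1 hspl
      have hPlast : P.getLast? = some ((Bs[j]'hjr).getLastD 0) := by
        rw [hPdef, List.take_succ]
        rw [List.getElem?_eq_getElem hjr]
        simp only [Option.toList_some]
        rw [List.flatten_append, List.getLast?_append, List.flatten_cons, List.flatten_nil,
          List.append_nil, getLast?_eq hBjne]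
        rfl
      refine ⟨m1, hik, hm1u, ⟨P ++ i :: S, ⟨?_, ?_, ?_, ?_⟩, hveq2, ?_⟩⟩
      · have h5 := hlen
        rw [husplit] at h5
        simpa using h5
      · -- TSpread
        refine List.isChain_append.2 ⟨hchP, ?_, ?_⟩
        · refine List.isChain_cons.2 ⟨?_, (List.isChain_cons.1 hchMS).2⟩
          intro y hy
          have := (List.isChain_cons.1 hchMS).1 y hy
          omega
        · intro x hx y hy
          rw [hPlast, Option.mem_some_iff] at hx
          subst hx
          rw [List.head?_cons, Option.mem_some_iff] at hy
          subst hy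
          exact hlow'
      · -- CBounded
        intro Bs' hd' B hB
        by_contra hlen'
        push_neg at hlen'
        have hrunle := notbounded_run hd' hB hlen'
        rw [hveq2] at hrunle
        rcases run_hits_i hBs hcb hrunle with ⟨a0, ha0, hia⟩
        have hmem_of_ne : ∀ x, x ∈ run t (B.headD 0) (c+1) → x ≠ i →
            x ∈ ((↑u : Multiset ℕ).erase m1) := by
          intro x hxr hxne
          have hxcnt := Multiset.count_le_of_le x hrunle
          rw [Multiset.count_cons, if_neg hxne, Multiset.coe_count] at hxcnt
          have hpos := List.count_pos_iff.2 hxr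
          exact Multiset.count_pos.1 (by omega)
        rcases Nat.eq_zero_or_pos t with rfl | ht1
        · -- t = 0
          have hie : i = B.headD 0 := by simpa using hia
          have h1 : Multiset.count i (↑(run 0 (B.headD 0) (c+1)) : Multiset ℕ) = c + 1 := by
            rw [Multiset.coe_count, run_zero_eq, hie, List.count_replicate_self]
          have h2 := Multiset.count_le_of_le i hrunle
          rw [h1, Multiset.count_cons, if_pos rfl] at h2
          have h3 : Multiset.count i ((↑u : Multiset ℕ).erase m1) ≤ u.count i := by
            have h6 := Multiset.count_le_of_le i (Multiset.erase_le m1 (↑u : Multiset ℕ))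
            rw [Multiset.coe_count] at h6
            exact h6
          have hiu : i ∈ u := List.count_pos_iff.1 (by omega)
          rcases hsplitb i hiu with hle | hge
          · have hsc : ¬ ((Bs[j]'hjr).length = c) := by
              intro hsc; rw [if_pos hsc] at hlow; omega
            rw [if_neg hsc] at hlow
            have hiM : i = (Bs[j]'hjr).getLastD 0 := by omega
            have hiBj : i ∈ (Bs[j]'hjr) := by rw [hiM]; exact hMmem
            have h4 : u.count i = ((Bs.take j).flatten).count i + (Bs[j]'hjr).count i
                + ((Bs.drop (j+1)).flatten).count i := by
              conv_lhs => rw [u_split_at hBs hjr]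
              rw [List.count_append, List.count_append]
            have h5 : ((Bs.take j).flatten).count i = 0 := by
              rw [List.count_eq_zero]
              intro hmem
              rcases mem_take_flatten hmem with ⟨l, hl, hlj2, hyl⟩
              have hlt := blocks_lt hBs hl hjr hlj2 hyl hiBj
              omega
            have h6 : ((Bs.drop (j+1)).flatten).count i = 0 := by
              rw [List.count_eq_zero]
              intro hmem
              rcases mem_drop_flatten hmem with ⟨l, hl, hlj2, hyl⟩
              have hlt := blocks_lt hBs hjr hl (by omega) hiBj hyl
              omega
            have h7 := List.count_le_length (l := (Bs[j]'hjr)) (a := i)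
            have h8 := hcb Bs hBs _ (List.getElem_mem hjr)
            omega
          · omega
        · -- t ≥ 1
          rcases Nat.lt_or_ge a0 c with hac | hac
          · have hxmem : (B.headD 0 + (a0+1) * t) ∈ run t (B.headD 0) (c+1) :=
              mem_run.2 ⟨a0+1, by omega, rfl⟩
            have hmul : (a0+1)*t = a0*t + t := by ring
            have hxne : B.headD 0 + (a0+1)*t ≠ i := by omega
            have hmemE := hmem_of_ne _ hxmem hxne
            have hit : B.headD 0 + (a0+1)*t = i + t := by omega
            rw [hit] at hmemE
            have hmemu : (i+t) ∈ u := by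
              simpa using Multiset.mem_of_le (Multiset.erase_le _ _) hmemE
            rcases hsplitb _ hmemu with hle | hge
            · omega
            · exact step_up_contra ht1 hpw hm1u hik hmemE hge
          · have hac' : a0 = c := by omega
            rw [hac'] at hia
            have hxmem : (B.headD 0 + (c-1) * t) ∈ run t (B.headD 0) (c+1) :=
              mem_run.2 ⟨c-1, by omega, rfl⟩
            have hmulc : c * t = (c-1)*t + t := by
              conv_lhs => rw [show c = (c-1)+1 by omega, Nat.succ_mul]
            have hxne : B.headD 0 + (c-1)*t ≠ i := by omega
            have hmemE := hmem_of_ne _ hxmem hxne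
            have hmemu : (B.headD 0 + (c-1)*t) ∈ u := by
              simpa using Multiset.mem_of_le (Multiset.erase_le _ _) hmemE
            rcases hsplitb _ hmemu with hle | hge
            swap
            · omega
            have hsc : ¬ ((Bs[j]'hjr).length = c) := by
              intro hsc; rw [if_pos hsc] at hlow; omega
            rw [if_neg hsc] at hlow
            have hxM : B.headD 0 + (c-1)*t = (Bs[j]'hjr).getLastD 0 := by omega
            have hrun2 : (↑(run t (B.headD 0) c) : Multiset ℕ) ≤ ↑u := by
              rw [Multiset.le_iff_count]
              intro x
              by_cases hxr : x ∈ run t (B.headD 0) c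
              · rcases mem_run.1 hxr with ⟨a, ha2, rfl⟩
                have hamul : a * t ≤ (c-1) * t := Nat.mul_le_mul_right t (by omega)
                have hane : B.headD 0 + a * t ≠ i := by omega
                have hxle := Multiset.count_le_of_le (B.headD 0 + a * t) hrunle
                rw [Multiset.count_cons, if_neg hane, Multiset.coe_count] at hxle
                have hsubrun : (run t (B.headD 0) c).Sublist (run t (B.headD 0) (c+1)) :=
                  run_sublist (by omega)
                have h9 := hsubrun.count_le (B.headD 0 + a * t)
                have h10 : Multiset.count (B.headD 0 + a * t) ((↑u : Multiset ℕ).erase m1)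
                    ≤ u.count (B.headD 0 + a*t) := by
                  have h11 := Multiset.count_le_of_le (B.headD 0 + a*t)
                    (Multiset.erase_le m1 (↑u : Multiset ℕ))
                  rw [Multiset.coe_count] at h11
                  exact h11
                simp only [Multiset.coe_count]
                omega
              · rw [Multiset.coe_count, List.count_eq_zero.2 hxr]
                exact Nat.zero_le _
            rcases run_le_block hBs (show c ≠ 0 by omega) hrun2 with ⟨l, hl, hlel⟩
            have hMrun : (B.headD 0 + (c-1)*t) ∈ run t (B.headD 0) c :=
              mem_run.2 ⟨c-1, by omega, rfl⟩
            have hMl : (B.headD 0 + (c-1)*t) ∈ (Bs[l]'hl) := by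
              have h12 := Multiset.mem_of_le hlel
                (show (B.headD 0 + (c-1)*t) ∈ (↑(run t (B.headD 0) c) : Multiset ℕ) by
                  simpa using hMrun)
              simpa using h12
            have hMBj : (B.headD 0 + (c-1)*t) ∈ (Bs[j]'hjr) := by rw [hxM]; exact hMmem
            have hlj : l = j := by
              rcases Nat.lt_trichotomy l j with h | h | h
              · have := blocks_lt hBs hl hjr h hMl hMBj
                omega
              · exact h
              · have := blocks_lt hBs hjr hl h hMBj hMl
                omega
            subst hlj
            have hcard := Multiset.card_le_card hlel
            simp only [Multiset.coe_card, run_length] at hcard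
            have hcard' : c ≤ (Bs[l]'hjr).length := hcard
            have h8 := hcb Bs hBs _ (List.getElem_mem hjr)
            omega
      · -- bounds
        intro x hx
        rcases List.mem_append.1 hx with hxP | hxc
        · exact hbounds x (by rw [husplit]; exact List.mem_append_left _ hxP)
        · rcases List.mem_cons.1 hxc with rfl | hxS
          · constructor
            · have hMu : (Bs[j]'hjr).getLastD 0 ∈ u := (mem_decomp_iff hBs).2 ⟨j, hjr, hMmem⟩
              have := (hbounds _ hMu).1
              omega
            · have := (hbounds _ hm1u).2
              omega
          · exact hbounds x
              (by rw [husplit]; exact List.mem_append_right _ (List.mem_cons_of_mem _ hxS))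
      · -- lex
        rw [husplit]
        exact lex_mid _ hik
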